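/- Let $\alpha\in(0,2)$, $c^+,c^-\geq 0$ with $c^++c^->0$, $a=(c^+-c^-)/(1-\alpha)$ if $\alpha\neq 1$ (and $a=0$, $c^+=c^-$ if $\alpha=1$), and $\nu(y)=c^+y^{-\alpha-1}\mathbf{1}_{\{y>0\}}+c^-|y|^{-\alpha-1}\mathbf{1}_{\{y<0\}}$. Then for every $x\in\mathbb{R}\setminus\{0\}$, $\int_0^\infty (u-1)\big(\mathbf{1}_{\{|u-1|<1\}}-\mathbf{1}_{\{|x(u-1)|<1\}}\big)\,\nu(\mathrm{sgn}(x)(u-1))\,du \; - \; \int_{-\infty}^0 (u-1)\mathbf{1}_{\{|x(u-1)|<1\}}\,\nu(\mathrm{sgn}(x)(u-1))\,du \; = \; \mathrm{sgn}(x)\,a\,(1-|x|^{\alpha-1})$. -/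

import Mathlib

open MeasureTheory Real Set

private noncomputable def W (α c d : ℝ) (t : ℝ) : ℝ :=
  if 0 < t then c * t ^ (-α - 1) else if t < 0 then d * |t| ^ (-α - 1) else 0

private noncomputable def GJ (α m : ℝ) (t : ℝ) : ℝ :=
  t ^ (-α) * ((if t < 1 then (1:ℝ) else 0) - (if m * t < 1 then (1:ℝ) else 0))

private noncomputable def FF (α c d m : ℝ) (t : ℝ) : ℝ :=
  t * ((if |t| < 1 then (1:ℝ) else 0) - (if m * |t| < 1 then (1:ℝ) else 0)) * W α c d t

private noncomputable def FB (α c d m : ℝ) (t : ℝ) : ℝ :=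
  t * (if m * |t| < 1 then (1:ℝ) else 0) * W α c d t

section
open intervalIntegral
private lemma intInt_of_le {a b : ℝ} {f : ℝ → ℝ} (h : a ≤ b) :
    ∫ x in a..b, f x = ∫ x in Set.Ioc a b, f x := integral_of_le h
private lemma intInt_rpow {a b rr : ℝ} (h : rr ≠ -1 ∧ (0:ℝ) ∉ Set.uIcc a b) :
    ∫ x in a..b, x ^ rr = (b ^ (rr + 1) - a ^ (rr + 1)) / (rr + 1) := integral_rpow (Or.inr h)
end

private lemma shiftIoi (f : ℝ → ℝ) :
    (∫ u in Set.Ioi (0:ℝ), f (u - 1)) = ∫ t in Set.Ioi (-1:ℝ), f t := by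
  rw [← integral_indicator measurableSet_Ioi, ← integral_indicator measurableSet_Ioi]
  conv_rhs => rw [← integral_sub_right_eq_self ((Set.Ioi (-1:ℝ)).indicator f) 1]
  congr 1
  ext u
  have h : ((-1:ℝ) < u - 1) ↔ 0 < u := by constructor <;> intro <;> linarith
  simp only [Set.indicator_apply, Set.mem_Ioi, h]

private lemma shiftIio (f : ℝ → ℝ) :
    (∫ u in Set.Iio (0:ℝ), f (u - 1)) = ∫ t in Set.Iio (-1:ℝ), f t := by
  rw [← integral_indicator measurableSet_Iio, ← integral_indicator measurableSet_Iio]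
  conv_rhs => rw [← integral_sub_right_eq_self ((Set.Iio (-1:ℝ)).indicator f) 1]
  congr 1
  ext u
  have h : (u - 1 < (-1:ℝ)) ↔ u < 0 := by constructor <;> intro <;> linarith
  simp only [Set.indicator_apply, Set.mem_Iio, h]

private lemma negIoo (f : ℝ → ℝ) :
    (∫ t in Set.Ioo (-1:ℝ) 0, f t) = ∫ t in Set.Ioo (0:ℝ) 1, f (-t) := by
  rw [← integral_indicator measurableSet_Ioo, ← integral_indicator measurableSet_Ioo]
  conv_rhs => rw [← integral_neg_eq_self ((Set.Ioo (0:ℝ) 1).indicator fun t => f (-t)) volume]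
  congr 1
  ext u
  have h : (-u ∈ Set.Ioo (0:ℝ) 1) ↔ u ∈ Set.Ioo (-1:ℝ) 0 := by
    simp only [Set.mem_Ioo]
    constructor <;> (rintro ⟨h1, h2⟩; constructor <;> linarith)
  simp only [Set.indicator_apply, h, neg_neg]

private lemma negIio (f : ℝ → ℝ) :
    (∫ t in Set.Iio (-1:ℝ), f t) = ∫ t in Set.Ioi (1:ℝ), f (-t) := by
  rw [← integral_indicator measurableSet_Iio, ← integral_indicator measurableSet_Ioi]
  conv_rhs => rw [← integral_neg_eq_self ((Set.Ioi (1:ℝ)).indicator fun t => f (-t)) volume]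
  congr 1
  ext u
  have h : (-u ∈ Set.Ioi (1:ℝ)) ↔ u ∈ Set.Iio (-1:ℝ) := by
    simp only [Set.mem_Ioi, Set.mem_Iio]
    constructor <;> intro <;> linarith
  simp only [Set.indicator_apply, h, neg_neg]

private lemma nu_neg (α cp cm : ℝ) (t : ℝ) :
    (if 0 < -t then cp * (-t) ^ (-α - 1) else if -t < 0 then cm * |(-t)| ^ (-α - 1) else 0)
      = W α cm cp t := by
  unfold W
  rcases lt_trichotomy t 0 with h | h | h
  · rw [if_pos (by linarith : (0:ℝ) < -t), if_neg (not_lt.mpr h.le), if_pos h, abs_of_neg h]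
  · simp [h]
  · rw [if_neg (by linarith : ¬ (0:ℝ) < -t), if_pos (by linarith : -t < 0), if_pos h,
      abs_neg, abs_of_pos h]

private lemma main_calc (α c d e m : ℝ) (hα0 : 0 < α)
    (he1 : α ≠ 1 → e = (c - d) / (1 - α)) (he2 : α = 1 → e = 0 ∧ c = d) (hm : 0 < m) :
    (∫ t in Set.Ioi (-1:ℝ), FF α c d m t) - (∫ t in Set.Iio (-1:ℝ), FB α c d m t)
      = e * (1 - m ^ (α - 1)) := by
  set r := m⁻¹ with hrdef
  have hr0 : 0 < r := inv_pos.mpr hm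
  have hiff : ∀ t : ℝ, (m * t < 1 ↔ t < r) := by
    intro t
    rw [hrdef, ← one_div, lt_div_iff₀ hm, mul_comm t m]
  have hrpow : ∀ t : ℝ, 0 < t → t ^ (-α) = t * t ^ (-α - 1) := fun t ht => by
    have h := Real.rpow_add ht 1 (-α - 1)
    rw [Real.rpow_one, show (1 + (-α - 1) : ℝ) = -α by ring] at h
    exact h
  have hcontpos : ∀ a b : ℝ, 0 < a → IntegrableOn (fun t : ℝ => t ^ (-α)) (Set.Ico a b) volume := by
    intro a b ha
    refine IntegrableOn.mono_set ?_ Set.Ico_subset_Icc_self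
    refine ContinuousOn.integrableOn_Icc ?_
    exact ContinuousOn.rpow_const continuousOn_id fun t ht =>
      Or.inl (ne_of_gt (lt_of_lt_of_le ha ht.1))
  -- EqOn facts for GJ
  have heq2 : Set.EqOn (GJ α m) ((Set.Ico r 1).indicator fun t => t ^ (-α)) (Set.Ioo 0 1) := by
    intro t ht
    by_cases h : t < r
    · have h2 : m * t < 1 := (hiff t).mpr h
      simp [GJ, Set.indicator_apply, Set.mem_Ico, if_pos ht.2, if_pos h2, not_le.mpr h]
    · have h2 : ¬ (m * t < 1) := fun hc => h ((hiff t).mp hc)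
      simp [GJ, Set.indicator_apply, Set.mem_Ico, if_pos ht.2, if_neg h2, not_lt.mp h, ht.2]
  have heq3 : Set.EqOn (GJ α m) ((Set.Ico 1 r).indicator fun t => -(t ^ (-α))) (Set.Ici 1) := by
    intro t ht
    have hn1 : ¬ t < 1 := not_lt.mpr ht
    by_cases h : t < r
    · have h2 : m * t < 1 := (hiff t).mpr h
      have hmem : t ∈ Set.Ico 1 r := ⟨ht, h⟩
      rw [Set.indicator_of_mem hmem]
      simp only [GJ, if_neg hn1, if_pos h2]
      ring
    · have h2 : ¬ (m * t < 1) := fun hc => h ((hiff t).mp hc)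
      rw [Set.indicator_of_notMem (fun hc => h hc.2)]
      simp only [GJ, if_neg hn1, if_neg h2]
      ring
  have hint2 : IntegrableOn (GJ α m) (Set.Ioo 0 1) volume :=
    (((integrable_indicator_iff measurableSet_Ico).mpr (hcontpos r 1 hr0)).integrableOn).congr_fun
      heq2.symm measurableSet_Ioo
  have hint3 : IntegrableOn (GJ α m) (Set.Ici 1) volume :=
    (((integrable_indicator_iff measurableSet_Ico).mpr ((hcontpos 1 r one_pos).neg)).integrableOn).congr_fun
      heq3.symm measurableSet_Ici
  have hJsplit : (∫ t in Set.Ioi (0:ℝ), GJ α m t)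
      = (∫ t in Set.Ioo (0:ℝ) 1, GJ α m t) + ∫ t in Set.Ici (1:ℝ), GJ α m t := by
    rw [← Set.Ioo_union_Ici_eq_Ioi (zero_lt_one : (0:ℝ) < 1)]
    exact setIntegral_union
      (Set.disjoint_left.mpr fun t ht h2 => absurd ht.2 (not_lt.mpr h2))
      measurableSet_Ici hint2 hint3
  -- FF on [0, ∞) is c * GJ
  have heqF : Set.EqOn (FF α c d m) (fun t => c * GJ α m t) (Set.Ici 0) := by
    intro t ht
    rcases eq_or_lt_of_le (Set.mem_Ici.mp ht : (0:ℝ) ≤ t) with h0 | h0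
    · simp [FF, W, GJ, ← h0, Real.zero_rpow (ne_of_lt (neg_lt_zero.mpr hα0))]
    · have habs : |t| = t := abs_of_pos h0
      simp only [FF, W, GJ, habs, if_pos h0]
      rw [hrpow t h0]; ring
  have hApos : (∫ t in Set.Ici (0:ℝ), FF α c d m t) = c * ∫ t in Set.Ioi (0:ℝ), GJ α m t := by
    rw [setIntegral_congr_fun measurableSet_Ici heqF, integral_const_mul,
      integral_Ici_eq_integral_Ioi]
  -- FF on (-1, 0)
  have heqFneg : Set.EqOn (FF α c d m)
      ((Set.Ioc (-1:ℝ) (-r)).indicator fun t => d * (t * |t| ^ (-α - 1))) (Set.Ioo (-1) 0) := by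
    intro t ht
    have ht1 : (-1:ℝ) < t := ht.1
    have ht2 : t < 0 := ht.2
    have hnp : ¬ (0 < t) := not_lt.mpr ht2.le
    have habs : |t| = -t := abs_of_neg ht2
    have habslt : |t| < 1 := by rw [habs]; linarith
    by_cases h : t ≤ -r
    · have h2 : ¬ (m * |t| < 1) := by
        rw [habs]; intro hc; have := (hiff (-t)).mp hc; linarith
      rw [Set.indicator_of_mem (Set.mem_Ioc.mpr ⟨ht1, h⟩)]
      simp only [FF, W, if_pos habslt, if_neg h2, if_neg hnp, if_pos ht2]
      ring
    · have h2 : m * |t| < 1 := by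
        rw [habs]; exact (hiff (-t)).mpr (by linarith [not_le.mp h])
      rw [Set.indicator_of_notMem (fun hc => h hc.2)]
      simp only [FF, W, if_pos habslt, if_pos h2, if_neg hnp, if_pos ht2]
      ring
  have hintFneg : IntegrableOn (FF α c d m) (Set.Ioo (-1:ℝ) 0) volume := by
    have hcneg : ContinuousOn (fun t : ℝ => d * (t * |t| ^ (-α - 1))) (Set.Icc (-1:ℝ) (-r)) := by
      refine continuousOn_const.mul (continuousOn_id.mul
        (ContinuousOn.rpow_const continuous_abs.continuousOn fun t ht => Or.inl ?_))
      have htneg : t < 0 := lt_of_le_of_lt ht.2 (by linarith)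
      exact abs_ne_zero.mpr (ne_of_lt htneg)
    exact (((integrable_indicator_iff measurableSet_Ioc).mpr
      ((hcneg.integrableOn_Icc).mono_set Set.Ioc_subset_Icc_self)).integrableOn).congr_fun
      heqFneg.symm measurableSet_Ioo
  have hintFpos : IntegrableOn (FF α c d m) (Set.Ici (0:ℝ)) volume := by
    have h1 : IntegrableOn (GJ α m) (Set.Ici (0:ℝ)) volume := by
      rw [integrableOn_Ici_iff_integrableOn_Ioi, ← Set.Ioo_union_Ici_eq_Ioi (zero_lt_one : (0:ℝ) < 1)]
      exact hint2.union hint3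
    exact IntegrableOn.congr_fun (h1.const_mul c) heqF.symm measurableSet_Ici
  have hAsplit : (∫ t in Set.Ioi (-1:ℝ), FF α c d m t)
      = (∫ t in Set.Ioo (-1:ℝ) 0, FF α c d m t) + ∫ t in Set.Ici (0:ℝ), FF α c d m t := by
    rw [← Set.Ioo_union_Ici_eq_Ioi (show (-1:ℝ) < 0 by norm_num)]
    exact setIntegral_union
      (Set.disjoint_left.mpr fun t ht h2 => absurd ht.2 (not_lt.mpr h2))
      measurableSet_Ici hintFneg hintFpos
  have hAneg : (∫ t in Set.Ioo (-1:ℝ) 0, FF α c d m t)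
      = -d * ∫ t in Set.Ioo (0:ℝ) 1, GJ α m t := by
    rw [negIoo]
    have heq : Set.EqOn (fun t => FF α c d m (-t)) (fun t => -d * GJ α m t) (Set.Ioo 0 1) := by
      intro t ht
      have ht0 : 0 < t := ht.1
      have hnp : ¬ (0 < -t) := not_lt.mpr (by linarith)
      have hneg : -t < 0 := by linarith
      have habs : |(-t)| = t := by rw [abs_neg, abs_of_pos ht0]
      simp only [FF, W, GJ, habs, if_neg hnp, if_pos hneg, if_pos ht.2]
      rw [hrpow t ht0]; ring
    rw [setIntegral_congr_fun measurableSet_Ioo heq, integral_const_mul]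
  have hB : (∫ t in Set.Iio (-1:ℝ), FB α c d m t) = d * ∫ t in Set.Ici (1:ℝ), GJ α m t := by
    rw [negIio]
    have heq : Set.EqOn (fun t => FB α c d m (-t)) (fun t => d * GJ α m t) (Set.Ioi 1) := by
      intro t ht
      have ht0 : (0:ℝ) < t := lt_trans one_pos ht
      have hnl : ¬ (t < 1) := not_lt.mpr (le_of_lt ht)
      have hnp : ¬ (0 < -t) := not_lt.mpr (by linarith)
      have hneg : -t < 0 := by linarith
      have habs : |(-t)| = t := by rw [abs_neg, abs_of_pos ht0]
      simp only [FB, W, GJ, habs, if_neg hnp, if_pos hneg, if_neg hnl]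
      rw [hrpow t ht0]; ring
    rw [setIntegral_congr_fun measurableSet_Ioi heq, integral_const_mul,
      ← integral_Ici_eq_integral_Ioi]
  have hJ2v : (∫ t in Set.Ioo (0:ℝ) 1, GJ α m t) = ∫ t in Set.Ico r 1, t ^ (-α) := by
    rw [setIntegral_congr_fun measurableSet_Ioo heq2, setIntegral_indicator measurableSet_Ico,
      Set.inter_eq_self_of_subset_right
        (show Set.Ico r 1 ⊆ Set.Ioo (0:ℝ) 1 from fun t ht => ⟨lt_of_lt_of_le hr0 ht.1, ht.2⟩)]
  have hJ3v : (∫ t in Set.Ici (1:ℝ), GJ α m t) = -∫ t in Set.Ico 1 r, t ^ (-α) := by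
    rw [setIntegral_congr_fun measurableSet_Ici heq3, setIntegral_indicator measurableSet_Ico,
      Set.inter_eq_self_of_subset_right (show Set.Ico (1:ℝ) r ⊆ Set.Ici 1 from fun t ht => ht.1),
      integral_neg]
  rw [hAsplit, hAneg, hApos, hB, hJsplit, hJ2v, hJ3v]
  by_cases hα1 : α = 1
  · obtain ⟨he0, hcd⟩ := he2 hα1
    rw [he0, hcd]; ring
  · rw [he1 hα1]
    have h0 : (0:ℝ) ∉ Set.uIcc r 1 := by
      rw [Set.mem_uIcc]
      rintro (⟨h, _⟩ | ⟨h, _⟩) <;> linarith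
    have hne : (-α : ℝ) ≠ -1 := fun hc => hα1 (by linarith [neg_injective hc])
    have hrm : r ^ (-α + 1) = m ^ (α - 1) := by
      rw [hrdef, Real.inv_rpow hm.le, ← Real.rpow_neg hm.le, show (-(-α + 1) : ℝ) = α - 1 by ring]
    have hkey : (∫ t in Set.Ico r 1, t ^ (-α)) - (∫ t in Set.Ico 1 r, t ^ (-α))
        = (1 - m ^ (α - 1)) / (1 - α) := by
      rcases le_or_gt r 1 with h | h
      · rw [Set.Ico_eq_empty (not_lt.mpr h), setIntegral_empty,
          MeasureTheory.integral_Ico_eq_integral_Ioo, ← integral_Ioc_eq_integral_Ioo,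
          ← intInt_of_le h, intInt_rpow ⟨hne, h0⟩, Real.one_rpow, hrm]
        ring
      · rw [Set.Ico_eq_empty (not_lt.mpr h.le), setIntegral_empty,
          MeasureTheory.integral_Ico_eq_integral_Ioo, ← integral_Ioc_eq_integral_Ioo,
          ← intInt_of_le h.le, intInt_rpow ⟨hne, Set.uIcc_comm r 1 ▸ h0⟩,
          Real.one_rpow, hrm]
        ring
    linear_combination (c - d) * hkey


/-- Lemma 3.2 of the paper: change-of-truncation identity for the Lévy measure of an
α-stable process. -/
theorem stmt1 (α cp cm a : ℝ) (hα : α ∈ Set.Ioo (0:ℝ) 2)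
    (hcp : 0 ≤ cp) (hcm : 0 ≤ cm) (hsum : 0 < cp + cm)
    (ha1 : α ≠ 1 → a = (cp - cm) / (1 - α))
    (ha2 : α = 1 → a = 0 ∧ cp = cm)
    (ν : ℝ → ℝ)
    (hν : ∀ y, ν y = if 0 < y then cp * y ^ (-α - 1)
      else if y < 0 then cm * |y| ^ (-α - 1) else 0)
    (x : ℝ) (hx : x ≠ 0) :
    (∫ u in Set.Ioi (0:ℝ),
        (u - 1) * ((if |u - 1| < 1 then (1:ℝ) else 0)
          - (if |x * (u - 1)| < 1 then (1:ℝ) else 0)) * ν (Real.sign x * (u - 1)))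
      - (∫ u in Set.Iio (0:ℝ),
        (u - 1) * (if |x * (u - 1)| < 1 then (1:ℝ) else 0) * ν (Real.sign x * (u - 1)))
      = Real.sign x * a * (1 - |x| ^ (α - 1)) := by
  rcases hx.lt_or_gt with hxneg | hxpos
  · have hs : Real.sign x = -1 := Real.sign_of_neg hxneg
    have h1 : (∫ u in Set.Ioi (0:ℝ),
        (u - 1) * ((if |u - 1| < 1 then (1:ℝ) else 0)
          - (if |x * (u - 1)| < 1 then (1:ℝ) else 0)) * ν (Real.sign x * (u - 1)))
        = ∫ u in Set.Ioi (0:ℝ), FF α cm cp (-x) (u - 1) := by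
      refine setIntegral_congr_fun measurableSet_Ioi fun u _ => ?_
      rw [hν, hs, neg_one_mul, abs_mul, abs_of_neg hxneg, nu_neg α cp cm (u - 1)]
      simp only [FF]
    have h2 : (∫ u in Set.Iio (0:ℝ),
        (u - 1) * (if |x * (u - 1)| < 1 then (1:ℝ) else 0) * ν (Real.sign x * (u - 1)))
        = ∫ u in Set.Iio (0:ℝ), FB α cm cp (-x) (u - 1) := by
      refine setIntegral_congr_fun measurableSet_Iio fun u _ => ?_
      rw [hν, hs, neg_one_mul, abs_mul, abs_of_neg hxneg, nu_neg α cp cm (u - 1)]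
      simp only [FB]
    rw [h1, h2, shiftIoi, shiftIio, hs, abs_of_neg hxneg, neg_one_mul]
    exact main_calc α cm cp (-a) (-x) hα.1
      (fun h => by rw [ha1 h]; ring)
      (fun h => ⟨by rw [(ha2 h).1]; ring, ((ha2 h).2).symm⟩)
      (by linarith)
  · have hs : Real.sign x = 1 := Real.sign_of_pos hxpos
    have h1 : (∫ u in Set.Ioi (0:ℝ),
        (u - 1) * ((if |u - 1| < 1 then (1:ℝ) else 0)
          - (if |x * (u - 1)| < 1 then (1:ℝ) else 0)) * ν (Real.sign x * (u - 1)))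
        = ∫ u in Set.Ioi (0:ℝ), FF α cp cm x (u - 1) := by
      refine setIntegral_congr_fun measurableSet_Ioi fun u _ => ?_
      rw [hν, hs, one_mul, abs_mul, abs_of_pos hxpos]
      simp only [FF, W]
    have h2 : (∫ u in Set.Iio (0:ℝ),
        (u - 1) * (if |x * (u - 1)| < 1 then (1:ℝ) else 0) * ν (Real.sign x * (u - 1)))
        = ∫ u in Set.Iio (0:ℝ), FB α cp cm x (u - 1) := by
      refine setIntegral_congr_fun measurableSet_Iio fun u _ => ?_
      rw [hν, hs, one_mul, abs_mul, abs_of_pos hxpos]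
      simp only [FB, W]
    rw [h1, h2, shiftIoi, shiftIio, hs, abs_of_pos hxpos, one_mul]
    exact main_calc α cp cm a x hα.1 ha1 (fun h => ⟨(ha2 h).1, (ha2 h).2⟩) hxpos
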